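/- arXiv:2412.09969 — 4 statements merged into one kernel-verified Lean document; each statement's English description precedes it below -/
import Mathlib

section
/- For k ≥ 3 with k not divisible by 3, the k-prism admits no injective 3-colouring. -/
def toZ3 (x : Fin 3) : ZMod 3 := (x.val : ZMod 3)
lemma toZ3_inj : Function.Injective toZ3 := by decide

open Fin.NatCast Fin.CommRing in
theorem prism_aux (k : ℕ) (hk : 3 ≤ k) (hdvd : ¬ 3 ∣ k)
    (G : SimpleGraph (Fin k × Fin 2))
    (hG : ∀ x y, G.Adj x y ↔ ((x.2 = y.2 ∧ x.1 ≠ y.1 ∧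
      (y.1.val = (x.1.val + 1) % k ∨ x.1.val = (y.1.val + 1) % k)) ∨
    (x.1 = y.1 ∧ x.2 ≠ y.2)))
    (c : Fin k × Fin 2 → Fin 3)
    (hinj : ∀ u v : Fin k × Fin 2, u ≠ v → (∃ w, G.Adj u w ∧ G.Adj v w) → c u ≠ c v) :
    False := by
  haveI : NeZero k := ⟨by omega⟩
  -- basic Fin facts
  have hval1 : ∀ i : Fin k, (i + 1).val = (i.val + 1) % k := by
    intro i
    rw [Fin.add_def, Fin.val_one']
    show (i.val + 1 % k) % k = (i.val + 1) % k
    rw [Nat.mod_eq_of_lt (by omega : 1 < k)]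
  have hne1 : ∀ i : Fin k, i ≠ i + 1 := by
    intro i h
    have h1 := congrArg Fin.val h
    rw [hval1] at h1
    have hlt := i.isLt
    rcases Nat.lt_or_ge (i.val + 1) k with h' | h'
    · rw [Nat.mod_eq_of_lt h'] at h1; omega
    · have he : i.val + 1 = k := by omega
      rw [he, Nat.mod_self] at h1; omega
  -- adjacency along the cycle and rungs
  have adjc : ∀ (i : Fin k) (j : Fin 2), G.Adj (i, j) (i + 1, j) := by
    intro i j
    rw [hG]
    exact Or.inl ⟨rfl, hne1 i, Or.inl (hval1 i)⟩
  have adjr : ∀ (i : Fin k), G.Adj (i, 0) (i, 1) := by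
    intro i
    rw [hG]
    exact Or.inr ⟨rfl, (by decide : (0 : Fin 2) ≠ 1)⟩
  -- the two colour sequences, valued in ZMod 3
  set a : Fin k → ZMod 3 := fun i => toZ3 (c (i, 0)) with ha
  set b : Fin k → ZMod 3 := fun i => toZ3 (c (i, 1)) with hb
  -- vertices i-1 and i+1 are distinct
  have hsubadd : ∀ i : Fin k, i - 1 ≠ i + 1 := by
    intro i h
    have h2 : i = i + 1 + 1 := by
      have := congrArg (· + 1) h
      simpa using this
    have h3 := congrArg Fin.val h2
    rw [hval1, hval1] at h3
    have hlt := i.isLt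
    rcases Nat.lt_or_ge (i.val + 1) k with h' | h'
    · rw [Nat.mod_eq_of_lt h'] at h3
      rcases Nat.lt_or_ge (i.val + 1 + 1) k with h'' | h''
      · rw [Nat.mod_eq_of_lt h''] at h3; omega
      · have he : i.val + 1 + 1 = k := by omega
        rw [he, Nat.mod_self] at h3; omega
    · have he : i.val + 1 = k := by omega
      rw [he, Nat.mod_self] at h3
      rw [Nat.mod_eq_of_lt (by omega : 0 + 1 < k)] at h3
      omega
  -- common-neighbour constraints
  have adjc' : ∀ (i : Fin k) (j : Fin 2), G.Adj (i - 1, j) (i, j) := by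
    intro i j
    have := adjc (i - 1) j
    simpa using this
  have key1 : ∀ i : Fin k, a (i - 1) ≠ a (i + 1) := by
    intro i h
    refine hinj (i - 1, 0) (i + 1, 0) ?_ ⟨(i, 0), adjc' i 0, (adjc i 0).symm⟩ (toZ3_inj h)
    simp [hsubadd i]
  have key1' : ∀ i : Fin k, b (i - 1) ≠ b (i + 1) := by
    intro i h
    refine hinj (i - 1, 1) (i + 1, 1) ?_ ⟨(i, 1), adjc' i 1, (adjc i 1).symm⟩ (toZ3_inj h)
    simp [hsubadd i]
  have key2 : ∀ i : Fin k, b i ≠ a (i - 1) := by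
    intro i h
    refine hinj (i, 1) (i - 1, 0) ?_ ⟨(i, 0), (adjr i).symm, adjc' i 0⟩ (toZ3_inj h)
    simp
  have key3 : ∀ i : Fin k, b i ≠ a (i + 1) := by
    intro i h
    refine hinj (i, 1) (i + 1, 0) ?_ ⟨(i, 0), (adjr i).symm, (adjc i 0).symm⟩ (toZ3_inj h)
    simp
  have key2' : ∀ i : Fin k, a i ≠ b (i - 1) := by
    intro i h
    refine hinj (i, 0) (i - 1, 1) ?_ ⟨(i, 1), adjr i, adjc' i 1⟩ (toZ3_inj h)
    simp
  have key3' : ∀ i : Fin k, a i ≠ b (i + 1) := by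
    intro i h
    refine hinj (i, 0) (i + 1, 1) ?_ ⟨(i, 1), adjr i, (adjc i 1).symm⟩ (toZ3_inj h)
    simp
  -- sums of distinct triples vanish in ZMod 3
  have triple : ∀ x y z : ZMod 3, x ≠ y → x ≠ z → y ≠ z → x + y + z = 0 := by decide
  have S1 : ∀ i : Fin k, a (i - 1) + a (i + 1) + b i = 0 := fun i =>
    triple _ _ _ (key1 i) (Ne.symm (key2 i)) (Ne.symm (key3 i))
  have S2 : ∀ i : Fin k, b (i - 1) + b (i + 1) + a i = 0 := fun i =>
    triple _ _ _ (key1' i) (Ne.symm (key2' i)) (Ne.symm (key3' i))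
  -- derive the step-2 recurrence
  have S3 : ∀ i : Fin k, a (i - 1 - 1) + a i + a (i + 1 + 1) = 0 := by
    intro i
    have e1 := S1 (i - 1)
    have e2 := S1 (i + 1)
    have e3 := S2 i
    have r1 : i - 1 + 1 = i := by ring
    have r2 : i + 1 - 1 = i := by ring
    rw [r1] at e1
    rw [r2] at e2
    linear_combination e1 + e2 - e3
  have diffstep : ∀ x y z : ZMod 3, x + y + z = 0 → z - y = y - x := by decide
  have step : ∀ i : Fin k, a (i + 1 + 1) - a i = a i - a (i - 1 - 1) :=
    fun i => diffstep _ _ _ (S3 i)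
  -- pass to natural-number indices
  set A : ℕ → ZMod 3 := fun n => a (n : Fin k) with hA
  have stepN : ∀ n : ℕ, A (n + 4) - A (n + 2) = A (n + 2) - A n := by
    intro n
    have := step ((n : Fin k) + 1 + 1)
    have c1 : ((n : Fin k) + 1 + 1 + 1 + 1 : Fin k) = ((n + 4 : ℕ) : Fin k) := by
      push_cast; ring
    have c2 : ((n : Fin k) + 1 + 1 - 1 - 1 : Fin k) = (n : Fin k) := by ring
    have c3 : ((n : Fin k) + 1 + 1 : Fin k) = ((n + 2 : ℕ) : Fin k) := by push_cast; ring
    rw [c1, c2] at this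
    simpa [hA, c3] using this
  have ind : ∀ m : ℕ, A (2 * m + 2) - A (2 * m) = A 2 - A 0 := by
    intro m
    induction m with
    | zero => norm_num
    | succ m ih =>
      have := stepN (2 * m)
      have r : 2 * (m + 1) + 2 = 2 * m + 4 := by ring
      have r2 : 2 * (m + 1) = 2 * m + 2 := by ring
      rw [r, r2, this, ih]
  have sum : ∀ m : ℕ, A (2 * m) - A 0 = (m : ZMod 3) * (A 2 - A 0) := by
    intro m
    induction m with
    | zero => norm_num
    | succ m ih =>
      have r2 : 2 * (m + 1) = 2 * m + 2 := by ring
      rw [r2]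
      have := ind m
      push_cast
      linear_combination this + ih
  -- conclude
  have hA2k : A (2 * k) = A 0 := by
    have : ((2 * k : ℕ) : Fin k) = ((0 : ℕ) : Fin k) := by push_cast; simp
    simp [hA, this]
  have hfin := sum k
  rw [hA2k] at hfin
  have hd : A 2 - A 0 ≠ 0 := by
    have h1 := key1 (1 : Fin k)
    have c0 : (1 : Fin k) - 1 = ((0 : ℕ) : Fin k) := by push_cast; ring
    have c2 : (1 : Fin k) + 1 = ((2 : ℕ) : Fin k) := by push_cast; ring
    rw [c0, c2] at h1
    intro h
    exact h1 (by linear_combination -h)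
  have hk0 : (k : ZMod 3) = 0 := by
    have : (k : ZMod 3) * (A 2 - A 0) = 0 := by linear_combination -hfin
    rcases mul_eq_zero.mp this with h | h
    · exact h
    · exact absurd h hd
  exact hdvd ((ZMod.natCast_eq_zero_iff k 3).mp hk0)



/-- `c` is an injective colouring of `G`: any two distinct vertices sharing a
common neighbour receive different colours. -/
def IsInjColoring {V α : Type} (G : SimpleGraph V) (c : V → α) : Prop :=
  ∀ u v : V, u ≠ v → (∃ w, G.Adj u w ∧ G.Adj v w) → c u ≠ c v

/-- The injective chromatic number of `G`, as an extended natural number. -/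
noncomputable def injChrom {V : Type} (G : SimpleGraph V) : ℕ∞ :=
  ⨅ n ∈ {n : ℕ | ∃ c : V → Fin n, IsInjColoring G c}, (n : ℕ∞)

/-- The `k`-prism: two `k`-cycles `u_0…u_{k−1}`, `v_0…v_{k−1}` (encoded as
`(i, 0)` and `(i, 1)`) together with the rungs `u_i v_i`. -/
def prism (k : ℕ) : SimpleGraph (Fin k × Fin 2) where
  Adj x y :=
    (x.2 = y.2 ∧ x.1 ≠ y.1 ∧
      (y.1.val = (x.1.val + 1) % k ∨ x.1.val = (y.1.val + 1) % k)) ∨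
    (x.1 = y.1 ∧ x.2 ≠ y.2)
  symm := by
    constructor
    rintro ⟨i, a⟩ ⟨j, b⟩ (⟨h1, h2, h3⟩ | ⟨h1, h2⟩)
    · exact Or.inl ⟨h1.symm, h2.symm, h3.symm⟩
    · exact Or.inr ⟨h1.symm, h2.symm⟩
  loopless := by
    constructor
    rintro ⟨i, a⟩ (⟨-, h, -⟩ | ⟨-, h⟩) <;> exact h rfl

/-- For `k ≥ 3` with `k` not divisible by 3, the `k`-prism admits no injective
3-colouring. -/
theorem prism_no_inj_three_coloring (k : ℕ) (hk : 3 ≤ k) (hdvd : ¬ 3 ∣ k) :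
    ¬ ∃ c : Fin k × Fin 2 → Fin 3, IsInjColoring (prism k) c := by
  rintro ⟨c, hc⟩
  exact prism_aux k hk hdvd (prism k) (fun x y => Iff.rfl) c hc
end

section
/- For every k ≥ 3, the k-prism admits an injective 4-colouring. -/
instance (k : ℕ) : DecidableRel (prism k).Adj := fun x y =>
  inferInstanceAs (Decidable ((x.2 = y.2 ∧ x.1 ≠ y.1 ∧
      (y.1.val = (x.1.val + 1) % k ∨ x.1.val = (y.1.val + 1) % k)) ∨
    (x.1 = y.1 ∧ x.2 ≠ y.2)))

/-- Auxiliary colouring function. -/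
def fcol (k i : ℕ) : ℕ :=
  if k % 3 = 0 then i % 3
  else if k % 3 = 1 then (if i = k - 1 then 3 else i % 3)
  else if i = k - 1 then 3
  else if i = k - 2 then 2
  else if i = k - 3 then 1
  else if i = k - 4 then 3
  else i % 3

lemma fcol_lt (k i : ℕ) : fcol k i < 4 := by
  unfold fcol; split_ifs <;> omega

lemma step (k a b : ℕ) (ha : a < k) (h : b = (a + 1) % k) :
    b = a + 1 ∨ (a = k - 1 ∧ b = 0) := by
  rcases Nat.lt_or_ge (a + 1) k with hlt | hge
  · left; rw [Nat.mod_eq_of_lt hlt] at h; exact h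
  · have hk : a + 1 = k := by omega
    right; rw [hk, Nat.mod_self] at h; omega

lemma fcol_ne1 (k i j : ℕ) (hk : 3 ≤ k) (hk5 : k ≠ 5) (hi : i < k) (hj : j < k)
    (d : j = i + 1 ∨ (i = k - 1 ∧ j = 0) ∨ i = j + 1 ∨ (j = k - 1 ∧ i = 0)) :
    fcol k i ≠ fcol k j := by
  unfold fcol; split_ifs <;> omega

lemma fcol_ne2 (k i j m : ℕ) (hk : 3 ≤ k) (hk5 : k ≠ 5) (hi : i < k) (hj : j < k)
    (hm : m < k) (hij : i ≠ j)
    (d1 : m = i + 1 ∨ (i = k - 1 ∧ m = 0) ∨ i = m + 1 ∨ (m = k - 1 ∧ i = 0))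
    (d2 : m = j + 1 ∨ (j = k - 1 ∧ m = 0) ∨ j = m + 1 ∨ (m = k - 1 ∧ j = 0)) :
    fcol k i ≠ fcol k j := by
  unfold fcol; split_ifs <;> omega

set_option maxHeartbeats 1000000 in
lemma five_col : IsInjColoring (prism 5)
    (fun x => (![![0, 0], ![1, 2], ![1, 2], ![3, 3], ![2, 1]] x.1 x.2 : Fin 4)) := by
  unfold IsInjColoring
  decide

/-- For every `k ≥ 3`, the `k`-prism admits an injective 4-colouring. -/
theorem prism_inj_four_coloring (k : ℕ) (hk : 3 ≤ k) :
    ∃ c : Fin k × Fin 2 → Fin 4, IsInjColoring (prism k) c := by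
  by_cases hk5 : k = 5
  · subst hk5
    exact ⟨_, five_col⟩
  · refine ⟨fun x => ⟨fcol k x.1.val, fcol_lt k _⟩, ?_⟩
    rintro ⟨i, s⟩ ⟨j, t⟩ hne ⟨⟨m, r⟩, h1, h2⟩
    have h1' : (s = r ∧ i ≠ m ∧
        (m.val = (i.val + 1) % k ∨ i.val = (m.val + 1) % k)) ∨ (i = m ∧ s ≠ r) := h1
    have h2' : (t = r ∧ j ≠ m ∧
        (m.val = (j.val + 1) % k ∨ j.val = (m.val + 1) % k)) ∨ (j = m ∧ t ≠ r) := h2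
    simp only [ne_eq, Fin.mk.injEq]
    have hi := i.isLt
    have hj := j.isLt
    have hm := m.isLt
    rcases h1' with ⟨hsr, him, hc1⟩ | ⟨him, hsr⟩ <;>
    rcases h2' with ⟨htr, hjm, hc2⟩ | ⟨hjm, htr⟩
    · -- cycle / cycle
      have hst : s = t := hsr.trans htr.symm
      have hij : i ≠ j := fun h => hne (by rw [h, hst])
      have hIJ : i.val ≠ j.val := fun h => hij (Fin.val_injective h)
      have d1 : m.val = i.val + 1 ∨ (i.val = k - 1 ∧ m.val = 0) ∨
          i.val = m.val + 1 ∨ (m.val = k - 1 ∧ i.val = 0) := by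
        rcases hc1 with h | h
        · rcases step k i.val m.val hi h with h' | h'
          · exact Or.inl h'
          · exact Or.inr (Or.inl h')
        · rcases step k m.val i.val hm h with h' | h'
          · exact Or.inr (Or.inr (Or.inl h'))
          · exact Or.inr (Or.inr (Or.inr h'))
      have d2 : m.val = j.val + 1 ∨ (j.val = k - 1 ∧ m.val = 0) ∨
          j.val = m.val + 1 ∨ (m.val = k - 1 ∧ j.val = 0) := by
        rcases hc2 with h | h
        · rcases step k j.val m.val hj h with h' | h'
          · exact Or.inl h'
          · exact Or.inr (Or.inl h')
        · rcases step k m.val j.val hm h with h' | h'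
          · exact Or.inr (Or.inr (Or.inl h'))
          · exact Or.inr (Or.inr (Or.inr h'))
      exact fcol_ne2 k i.val j.val m.val hk hk5 hi hj hm hIJ d1 d2
    · -- cycle u / rung v : j = m
      subst hjm
      have d : j.val = i.val + 1 ∨ (i.val = k - 1 ∧ j.val = 0) ∨
          i.val = j.val + 1 ∨ (j.val = k - 1 ∧ i.val = 0) := by
        rcases hc1 with h | h
        · rcases step k i.val j.val hi h with h' | h'
          · exact Or.inl h'
          · exact Or.inr (Or.inl h')
        · rcases step k j.val i.val hj h with h' | h'
          · exact Or.inr (Or.inr (Or.inl h'))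
          · exact Or.inr (Or.inr (Or.inr h'))
      exact fcol_ne1 k i.val j.val hk hk5 hi hj d
    · -- rung u / cycle v : i = m
      subst him
      have d : i.val = j.val + 1 ∨ (j.val = k - 1 ∧ i.val = 0) ∨
          j.val = i.val + 1 ∨ (i.val = k - 1 ∧ j.val = 0) := by
        rcases hc2 with h | h
        · rcases step k j.val i.val hj h with h' | h'
          · exact Or.inl h'
          · exact Or.inr (Or.inl h')
        · rcases step k i.val j.val hi h with h' | h'
          · exact Or.inr (Or.inr (Or.inl h'))
          · exact Or.inr (Or.inr (Or.inr h'))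
      exact (fcol_ne1 k j.val i.val hk hk5 hj hi d).symm
    · -- rung / rung : contradiction
      exfalso
      have hij : i = j := him.trans hjm.symm
      have hs := s.isLt; have ht := t.isLt; have hr := r.isLt
      have hsr' : s.val ≠ r.val := fun h => hsr (Fin.val_injective h)
      have htr' : t.val ≠ r.val := fun h => htr (Fin.val_injective h)
      have hst : s = t := Fin.val_injective (by omega)
      exact hne (by rw [hij, hst])
end

section
/- For r ≥ 5 with r not divisible by 3, the generalised dodecahedron D_r admits no injective 3-colouring. -/
set_option maxHeartbeats 1000000

/-- One orientation of the edges of the generalised dodecahedron `D_r`.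
Vertices are encoded as `(i, t)` with `t = 0` for `u_i`, `t = 1` for `v_i`,
`t = 2` for `u'_i` and `t = 3` for `v'_i`; indices are modulo `r`. -/
def dodecRel (r : ℕ) (x y : Fin r × Fin 4) : Prop :=
  (x.2.val = 0 ∧ y.2.val = 0 ∧ y.1.val = (x.1.val + 1) % r) ∨
  (x.2.val = 1 ∧ y.2.val = 1 ∧ y.1.val = (x.1.val + 1) % r) ∨
  (x.2.val = 0 ∧ y.2.val = 2 ∧ y.1 = x.1) ∨
  (x.2.val = 1 ∧ y.2.val = 3 ∧ y.1 = x.1) ∨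
  (x.2.val = 3 ∧ y.2.val = 2 ∧ y.1 = x.1) ∨
  (x.2.val = 2 ∧ y.2.val = 3 ∧ y.1.val = (x.1.val + 1) % r)

/-- The generalised dodecahedron `D_r`. -/
def genDodec (r : ℕ) : SimpleGraph (Fin r × Fin 4) where
  Adj x y := x ≠ y ∧ (dodecRel r x y ∨ dodecRel r y x)
  symm := by
    constructor
    rintro x y ⟨h1, h2⟩
    exact ⟨h1.symm, h2.symm⟩
  loopless := ⟨fun x h => h.1 rfl⟩

/-- The "third colour" function on `Fin 3`. -/
def thd (x y : Fin 3) : Fin 3 := -(x+y)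

lemma thd_eq : ∀ x y z : Fin 3, (x ≠ y ∧ x ≠ z ∧ y ≠ z) → z = thd x y := by decide

lemma pigeon3 : ∀ x y z w : Fin 3, (x ≠ y ∧ x ≠ z ∧ y ≠ z ∧ w ≠ y ∧ w ≠ z) → w = x := by decide

lemma key : ∀ a1 a2 a3 b0 b1 b2 b3 b4 : Fin 3,
    (a1 ≠ a3 ∧ b0 ≠ b2 ∧ b2 ≠ b4 ∧
    a1 ≠ thd b0 b2 ∧ a1 ≠ thd b1 b3 ∧ thd b0 b2 ≠ thd b1 b3 ∧
    a2 ≠ thd b1 b3 ∧ a2 ≠ thd b2 b4 ∧ thd b1 b3 ≠ thd b2 b4 ∧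
    b2 ≠ thd a1 a3) →
    a2 ≠ a3 := by decide

open Fin.NatCast Fin.CommRing in
/-- Abstract combinatorial core. -/
theorem dodecAux (r : ℕ) [NeZero r] (hr : 5 ≤ r) (hdvd : ¬ 3 ∣ r)
    (A B P Q : Fin r → Fin 3)
    (c1 : ∀ i, A i ≠ A (i+1+1))
    (c2 : ∀ i, B i ≠ B (i+1+1))
    (c3 : ∀ i, A i ≠ P (i+1))
    (c4 : ∀ i, A (i+1+1) ≠ P (i+1))
    (c5 : ∀ i, B i ≠ Q (i+1))
    (c6 : ∀ i, B (i+1+1) ≠ Q (i+1))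
    (c7 : ∀ i, A i ≠ Q i)
    (c8 : ∀ i, A i ≠ Q (i+1))
    (c9 : ∀ i, Q i ≠ Q (i+1))
    (c10 : ∀ i, B (i+1) ≠ P (i+1))
    (c11 : ∀ i, B (i+1) ≠ P i)
    (c12 : ∀ i, P i ≠ P (i+1)) : False := by
  have hQ : ∀ i, Q (i+1) = thd (B i) (B (i+1+1)) :=
    fun i => thd_eq _ _ _ ⟨c2 i, c5 i, c6 i⟩
  have hP : ∀ i, P (i+1) = thd (A i) (A (i+1+1)) :=
    fun i => thd_eq _ _ _ ⟨c1 i, c3 i, c4 i⟩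
  have hA23 : ∀ i, A (i+1+1) ≠ A (i+1+1+1) := by
    intro i
    apply key (A (i+1)) _ _ (B i) (B (i+1)) (B (i+1+1)) (B (i+1+1+1)) (B (i+1+1+1+1))
    rw [← hQ i, ← hQ (i+1), ← hQ (i+1+1), ← hP (i+1)]
    exact ⟨c1 (i+1), c2 i, c2 (i+1+1), c7 (i+1), c8 (i+1), c9 (i+1),
      c7 (i+1+1), c8 (i+1+1), c9 (i+1+1), c10 (i+1)⟩
  have hstep : ∀ j : Fin r, A j ≠ A (j+1) := by
    intro j
    have h := hA23 (j-1-1)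
    have e : j - 1 - 1 + 1 + 1 = j := by
      rw [sub_add_cancel, sub_add_cancel]
    rw [e] at h
    exact h
  have hthree : ∀ j, A (j+1+1+1) = A j :=
    fun j => pigeon3 (A j) (A (j+1)) (A (j+1+1)) (A (j+1+1+1))
      ⟨hstep j, c1 j, hstep (j+1), (c1 (j+1)).symm, (hstep (j+1+1)).symm⟩
  have hmul : ∀ (k : ℕ) (j : Fin r), A (j + ((3*k : ℕ) : Fin r)) = A j := by
    intro k
    induction k with
    | zero => intro j; simp
    | succ k ih =>
      intro j
      have e : ((3*(k+1) : ℕ) : Fin r) = ((3*k : ℕ) : Fin r) + 1 + 1 + 1 := by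
        push_cast; ring
      rw [e, ← add_assoc, ← add_assoc, ← add_assoc, hthree, ih]
  obtain ⟨k, hk⟩ : ∃ k : ℕ, 3 * k % r = 1 := by
    rcases (by omega : r % 3 = 1 ∨ r % 3 = 2) with h | h
    · refine ⟨(2*r+1)/3, ?_⟩
      have h3 : 3 * ((2*r+1)/3) = 1 + 2*r := by omega
      rw [h3, Nat.add_mul_mod_self_right]
      exact Nat.mod_eq_of_lt (by omega)
    · refine ⟨(r+1)/3, ?_⟩
      have h3 : 3 * ((r+1)/3) = 1 + 1*r := by omega
      rw [h3, Nat.add_mul_mod_self_right]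
      exact Nat.mod_eq_of_lt (by omega)
  have hcast : ((3*k : ℕ) : Fin r) = 1 := by
    apply Fin.ext
    rw [Fin.val_natCast, hk, Fin.val_one']
    exact (Nat.mod_eq_of_lt (by omega)).symm
  have hper := hmul k 0
  rw [hcast] at hper
  exact hstep 0 hper.symm

/-- For `r ≥ 5` with `r` not divisible by 3, the generalised dodecahedron `D_r`
admits no injective 3-colouring. -/
theorem genDodec_no_inj_three_coloring (r : ℕ) (hr : 5 ≤ r) (hdvd : ¬ 3 ∣ r) :
    ¬ ∃ c : Fin r × Fin 4 → Fin 3, IsInjColoring (genDodec r) c := by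
  rintro ⟨c, hc⟩
  haveI : NeZero r := ⟨by omega⟩
  have h1r : (1 : Fin r).val = 1 := by
    rw [Fin.val_one']; exact Nat.mod_eq_of_lt (by omega)
  have hv1 : ∀ i : Fin r, ((i+1 : Fin r)).val = (i.val + 1) % r := by
    intro i; rw [Fin.val_add, h1r]
  have hne1 : ∀ i : Fin r, i ≠ i + 1 := by
    intro i h
    have hv := hv1 i
    rw [← h] at hv
    have hi := i.isLt
    rcases Nat.lt_or_ge (i.val+1) r with hlt | hge
    · rw [Nat.mod_eq_of_lt hlt] at hv; omega
    · have e : i.val + 1 = r := by omega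
      rw [e, Nat.mod_self] at hv; omega
  have hv2 : ∀ i : Fin r, ((i+1+1 : Fin r)).val = (i.val + 2) % r := by
    intro i; rw [hv1, hv1, Nat.mod_add_mod]
  have hne2 : ∀ i : Fin r, i ≠ i + 1 + 1 := by
    intro i h
    have hv := hv2 i
    rw [← h] at hv
    have hi := i.isLt
    rcases Nat.lt_or_ge (i.val+2) r with hlt | hge
    · rw [Nat.mod_eq_of_lt hlt] at hv; omega
    · rw [Nat.mod_eq_sub_mod hge, Nat.mod_eq_of_lt (by omega)] at hv; omega
  have neSnd : ∀ (i j : Fin r) (a b : Fin 4), a ≠ b →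
      ((i,a) : Fin r × Fin 4) ≠ (j,b) := fun i j a b hab h => hab (congrArg Prod.snd h)
  have neFst : ∀ (i j : Fin r) (a : Fin 4), i ≠ j →
      ((i,a) : Fin r × Fin 4) ≠ (j,a) := fun i j a hij h => hij (congrArg Prod.fst h)
  have adj_uu : ∀ i : Fin r, (genDodec r).Adj (i,0) (i+1,0) :=
    fun i => ⟨neFst _ _ _ (hne1 i), Or.inl (Or.inl ⟨rfl, rfl, hv1 i⟩)⟩
  have adj_vv : ∀ i : Fin r, (genDodec r).Adj (i,1) (i+1,1) :=
    fun i => ⟨neFst _ _ _ (hne1 i), Or.inl (Or.inr (Or.inl ⟨rfl, rfl, hv1 i⟩))⟩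
  have adj_uu' : ∀ i : Fin r, (genDodec r).Adj (i,0) (i,2) :=
    fun i => ⟨neSnd _ _ _ _ (by decide), Or.inl (Or.inr (Or.inr (Or.inl ⟨rfl, rfl, rfl⟩)))⟩
  have adj_vv' : ∀ i : Fin r, (genDodec r).Adj (i,1) (i,3) :=
    fun i => ⟨neSnd _ _ _ _ (by decide),
      Or.inl (Or.inr (Or.inr (Or.inr (Or.inl ⟨rfl, rfl, rfl⟩))))⟩
  have adj_v'u' : ∀ i : Fin r, (genDodec r).Adj (i,3) (i,2) :=
    fun i => ⟨neSnd _ _ _ _ (by decide),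
      Or.inl (Or.inr (Or.inr (Or.inr (Or.inr (Or.inl ⟨rfl, rfl, rfl⟩)))))⟩
  have adj_u'v' : ∀ i : Fin r, (genDodec r).Adj (i,2) (i+1,3) :=
    fun i => ⟨neSnd _ _ _ _ (by decide),
      Or.inl (Or.inr (Or.inr (Or.inr (Or.inr (Or.inr ⟨rfl, rfl, hv1 i⟩)))))⟩
  exact dodecAux r hr hdvd (fun i => c (i,0)) (fun i => c (i,1)) (fun i => c (i,2)) (fun i => c (i,3))
    (fun i => hc _ _ (neFst _ _ _ (hne2 i)) ⟨(i+1,0), adj_uu i, (adj_uu (i+1)).symm⟩)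
    (fun i => hc _ _ (neFst _ _ _ (hne2 i)) ⟨(i+1,1), adj_vv i, (adj_vv (i+1)).symm⟩)
    (fun i => hc _ _ (neSnd _ _ _ _ (by decide)) ⟨(i+1,0), adj_uu i, (adj_uu' (i+1)).symm⟩)
    (fun i => hc _ _ (neSnd _ _ _ _ (by decide)) ⟨(i+1,0), (adj_uu (i+1)).symm, (adj_uu' (i+1)).symm⟩)
    (fun i => hc _ _ (neSnd _ _ _ _ (by decide)) ⟨(i+1,1), adj_vv i, (adj_vv' (i+1)).symm⟩)
    (fun i => hc _ _ (neSnd _ _ _ _ (by decide)) ⟨(i+1,1), (adj_vv (i+1)).symm, (adj_vv' (i+1)).symm⟩)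
    (fun i => hc _ _ (neSnd _ _ _ _ (by decide)) ⟨(i,2), adj_uu' i, adj_v'u' i⟩)
    (fun i => hc _ _ (neSnd _ _ _ _ (by decide)) ⟨(i,2), adj_uu' i, (adj_u'v' i).symm⟩)
    (fun i => hc _ _ (neFst _ _ _ (hne1 i)) ⟨(i,2), adj_v'u' i, (adj_u'v' i).symm⟩)
    (fun i => hc _ _ (neSnd _ _ _ _ (by decide)) ⟨(i+1,3), adj_vv' (i+1), (adj_v'u' (i+1)).symm⟩)
    (fun i => hc _ _ (neSnd _ _ _ _ (by decide)) ⟨(i+1,3), adj_vv' (i+1), adj_u'v' i⟩)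
    (fun i => hc _ _ (neFst _ _ _ (hne1 i)) ⟨(i+1,3), adj_u'v' i, (adj_v'u' (i+1)).symm⟩)
end

section
/- In any injective colouring of the k-prism (k ≥ 3, indices mod k), if the vertices u_{i−1}, u_{i+1}, v_i (the three neighbours of u_i) determine three distinct colours, and the colouring uses only 3 colours, then the colour of every vertex of the prism is uniquely determined by the colours of u_0, u_2, and v_1 when k is odd. -/
namespace PrismAux

/-- The third colour. -/
def third (x y : Fin 3) : Fin 3 := ⟨(6 - x.val - y.val) % 3, Nat.mod_lt _ (by norm_num)⟩

lemma third_spec : ∀ x y z : Fin 3, x ≠ y → x ≠ z → y ≠ z → z = third x y := by decide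

lemma third_comm : ∀ x y : Fin 3, third x y = third y x := by decide

variable {k : ℕ}

def U (k : ℕ) (hk : 0 < k) (n : ℕ) : Fin k × Fin 2 := (⟨n % k, Nat.mod_lt _ hk⟩, 0)
def Vv (k : ℕ) (hk : 0 < k) (n : ℕ) : Fin k × Fin 2 := (⟨n % k, Nat.mod_lt _ hk⟩, 1)

lemma mod_ne (d n : ℕ) (h1 : 0 < d) (h2 : d < k) : (n + d) % k ≠ n % k := by
  intro h
  have h3 : k ∣ (n + d) - n := (Nat.modEq_iff_dvd' (by omega)).mp h.symm
  simp only [Nat.add_sub_cancel_left] at h3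
  have := Nat.le_of_dvd h1 h3
  omega

lemma U_congr (hk : 0 < k) {m n : ℕ} (h : m % k = n % k) : U k hk m = U k hk n := by
  simp only [U, Prod.mk.injEq, Fin.mk.injEq, h, and_self]

lemma Vv_congr (hk : 0 < k) {m n : ℕ} (h : m % k = n % k) : Vv k hk m = Vv k hk n := by
  simp only [Vv, Prod.mk.injEq, Fin.mk.injEq, h, and_self]

lemma pos_of_three_le (hk : 3 ≤ k) : 0 < k := by omega

lemma U_ne_U (hk : 3 ≤ k) {m n : ℕ} (h : m % k ≠ n % k) :
    U k (pos_of_three_le hk) m ≠ U k (pos_of_three_le hk) n := by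
  intro he
  exact h (congrArg Fin.val (congrArg Prod.fst he))

lemma U_ne_Vv (hk : 0 < k) (m n : ℕ) : U k hk m ≠ Vv k hk n := by
  intro he
  have h2 := congrArg Prod.snd he
  simp only [U, Vv] at h2
  exact absurd h2 (by decide)

lemma succ_mod (hk : 3 ≤ k) (n : ℕ) : (n + 1) % k = (n % k + 1) % k := by
  conv_lhs => rw [Nat.add_mod, Nat.mod_eq_of_lt (show 1 < k by omega)]

lemma adjU (hk : 3 ≤ k) (n : ℕ) :
    (prism k).Adj (U k (pos_of_three_le hk) n) (U k (pos_of_three_le hk) (n + 1)) := by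
  refine Or.inl ⟨rfl, ?_, Or.inl ?_⟩
  · intro he
    exact mod_ne 1 n (by omega) (by omega) (congrArg Fin.val he).symm
  · exact succ_mod hk n

lemma adjV (hk : 3 ≤ k) (n : ℕ) :
    (prism k).Adj (Vv k (pos_of_three_le hk) n) (Vv k (pos_of_three_le hk) (n + 1)) := by
  refine Or.inl ⟨rfl, ?_, Or.inl ?_⟩
  · intro he
    exact mod_ne 1 n (by omega) (by omega) (congrArg Fin.val he).symm
  · exact succ_mod hk n

lemma adjUV (hk : 0 < k) (n : ℕ) : (prism k).Adj (U k hk n) (Vv k hk n) :=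
  Or.inr ⟨rfl, by simp only [U, Vv]; decide⟩

section Coloring

variable (hk : 3 ≤ k) (c : Fin k × Fin 2 → Fin 3)
variable (hc3 : ∀ x y z : Fin k × Fin 2,
      (prism k).Adj x y → (prism k).Adj x z → y ≠ z → c y ≠ c z)

include hk hc3

lemma distinctU (n : ℕ) : c (U k (pos_of_three_le hk) n) ≠ c (U k (pos_of_three_le hk) (n + 2)) := by
  refine hc3 (U k (by omega) (n+1)) _ _ ((adjU hk n).symm) (adjU hk (n+1)) ?_
  exact (U_ne_U hk (mod_ne 2 n (by omega) (by omega))).symm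

lemma distinctV (n : ℕ) : c (Vv k (pos_of_three_le hk) (n+1)) ≠ c (Vv k (pos_of_three_le hk) (n + 3)) := by
  refine hc3 (Vv k (by omega) (n+2)) _ _ ((adjV hk (n+1)).symm) (adjV hk (n+2)) ?_
  intro he
  exact mod_ne 2 (n+1) (by omega) (by omega) (congrArg Fin.val (congrArg Prod.fst he)).symm

lemma detV (n : ℕ) :
    c (Vv k (pos_of_three_le hk) (n+1)) = third (c (U k (pos_of_three_le hk) n)) (c (U k (pos_of_three_le hk) (n+2))) := by
  have a1 := (adjU hk n).symm
  have a2 := adjU hk (n+1)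
  have a3 := adjUV (show 0 < k by omega) (n+1)
  refine third_spec _ _ _ (distinctU hk c hc3 n) ?_ ?_
  · exact hc3 _ _ _ a1 a3 (U_ne_Vv _ _ _)
  · exact hc3 _ _ _ a2 a3 (U_ne_Vv _ _ _)

lemma recU (n : ℕ) :
    c (U k (pos_of_three_le hk) (n+4)) = third (c (U k (pos_of_three_le hk) n)) (c (U k (pos_of_three_le hk) (n+2))) := by
  have hxy := distinctU hk c hc3 n
  have hyz := distinctU hk c hc3 (n+2)
  refine third_spec _ _ _ hxy ?_ hyz
  intro h
  have h1 := detV hk c hc3 n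
  have h2 := detV hk c hc3 (n+2)
  apply distinctV hk c hc3 n
  rw [h1, h2, ← h, third_comm]

end Coloring

end PrismAux

open PrismAux in
/-- In any injective 3-colouring of the `k`-prism with `k` odd (`k ≥ 3`),
the neighbours of each vertex receive pairwise distinct colours, and the whole
colouring is uniquely determined by the colours of `u_0`, `u_2` and `v_1`. -/
theorem prism_inj_three_coloring_determined (k : ℕ) (hk : 3 ≤ k) (hodd : Odd k)
    (c c' : Fin k × Fin 2 → Fin 3)
    (hc : IsInjColoring (prism k) c) (hc' : IsInjColoring (prism k) c')
    (hc3 : ∀ x y z : Fin k × Fin 2,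
      (prism k).Adj x y → (prism k).Adj x z → y ≠ z → c y ≠ c z)
    (hc'3 : ∀ x y z : Fin k × Fin 2,
      (prism k).Adj x y → (prism k).Adj x z → y ≠ z → c' y ≠ c' z)
    (hu0 : c (⟨0, by omega⟩, 0) = c' (⟨0, by omega⟩, 0))
    (hu2 : c (⟨2, by omega⟩, 0) = c' (⟨2, by omega⟩, 0))
    (hv1 : c (⟨1, by omega⟩, 1) = c' (⟨1, by omega⟩, 1)) :
    c = c' := by
  have hk0 : 0 < k := by omega
  have eU0 : U k hk0 (2*0) = ((⟨0, by omega⟩ : Fin k), (0 : Fin 2)) := by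
    simp [U]
  have eU2 : U k hk0 (2*0+2) = ((⟨2, by omega⟩ : Fin k), (0 : Fin 2)) := by
    simp [U, Nat.mod_eq_of_lt (show 2 < k by omega)]
  have hU : ∀ t, c (U k hk0 (2*t)) = c' (U k hk0 (2*t)) ∧
      c (U k hk0 (2*t+2)) = c' (U k hk0 (2*t+2)) := by
    intro t
    induction t with
    | zero => exact ⟨by rw [eU0]; exact hu0, by rw [eU2]; exact hu2⟩
    | succ t ih =>
      constructor
      · have e : 2*(t+1) = 2*t+2 := by ring
        rw [e]; exact ih.2
      · have e : 2*(t+1)+2 = (2*t)+4 := by ring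
        rw [e, recU hk c hc3 (2*t), recU hk c' hc'3 (2*t), ih.1, ih.2]
  have hUall : ∀ n, c (U k hk0 n) = c' (U k hk0 n) := by
    intro n
    obtain ⟨m, hm⟩ := hodd
    have e : 2*(n*(m+1)) = n + n*k := by rw [hm]; ring
    have hcongr : U k hk0 (2*(n*(m+1))) = U k hk0 n :=
      U_congr hk0 (by rw [e, Nat.add_mul_mod_self_right])
    rw [← hcongr]
    exact (hU (n*(m+1))).1
  have hVsucc : ∀ n, c (Vv k hk0 (n+1)) = c' (Vv k hk0 (n+1)) := by
    intro n
    rw [detV hk c hc3 n, detV hk c' hc'3 n, hUall n, hUall (n+2)]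
  have hVall : ∀ n, c (Vv k hk0 n) = c' (Vv k hk0 n) := by
    intro n
    have hcongr : Vv k hk0 (n + (k-1) + 1) = Vv k hk0 n := by
      apply Vv_congr
      have : n + (k-1) + 1 = n + k := by omega
      rw [this, Nat.add_mod_right]
    rw [← hcongr]
    exact hVsucc (n + (k-1))
  funext x
  obtain ⟨i, j⟩ := x
  have hi : i.val % k = i.val := Nat.mod_eq_of_lt i.isLt
  fin_cases j
  · show c (i, 0) = c' (i, 0)
    have h2 : ((i, 0) : Fin k × Fin 2) = U k hk0 i.val := by
      simp [U, hi]
    rw [h2]; exact hUall i.val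
  · show c (i, 1) = c' (i, 1)
    have h2 : ((i, 1) : Fin k × Fin 2) = Vv k hk0 i.val := by
      simp [Vv, hi]
    rw [h2]; exact hVall i.val
end
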